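/- Let l ≥ 1 be an integer and 0 < λ < 1, write h = −log λ, and set T_l(λ) = Σ_{n≥1} n^l λ^n/(1−λ^n) and I_l(λ) = ∫_1^∞ x^l λ^x/(1−λ^x) dx. Then |T_l(λ) − I_l(λ)| ≤ 2·l!/h^l. (This follows because the function f(x) = x^l λ^x/(1−λ^x) on [0,∞) increases to a single maximum and then decreases to 0, its total variation is twice its maximum, and its maximum is at most l!/h^l since e^y − 1 ≥ y^l/l! for y > 0.) -/

import Mathlib

open MeasureTheory

namespace Stmt6

open Real Set

noncomputable def phiA (l : ℕ) (y : ℝ) : ℝ := l * (Real.exp y - 1) - y * Real.exp y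

noncomputable def fA (l : ℕ) (h x : ℝ) : ℝ := x ^ l / (Real.exp (h * x) - 1)

lemma phiA_hasDerivAt (l : ℕ) (y : ℝ) :
    HasDerivAt (phiA l) (((l : ℝ) - 1 - y) * Real.exp y) y := by
  have h1 : HasDerivAt Real.exp (Real.exp y) y := Real.hasDerivAt_exp y
  have h2 : HasDerivAt (fun y : ℝ => (l : ℝ) * (Real.exp y - 1)) ((l : ℝ) * Real.exp y) y := by
    simpa using (h1.sub_const 1).const_mul (l : ℝ)
  have h3 : HasDerivAt (fun y : ℝ => y * Real.exp y)
      (1 * Real.exp y + y * Real.exp y) y := (hasDerivAt_id y).mul h1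
  have h4 := h2.sub h3
  refine h4.congr_deriv ?_
  ring

lemma phiA_cont (l : ℕ) : Continuous (phiA l) := by
  unfold phiA; fun_prop

lemma phiA_zero (l : ℕ) : phiA l 0 = 0 := by simp [phiA]

lemma phiA_root (l : ℕ) (hl : 1 ≤ l) :
    ∃ ys : ℝ, 0 ≤ ys ∧ (∀ y, 0 ≤ y → y ≤ ys → 0 ≤ phiA l y) ∧
      (∀ y, ys ≤ y → phiA l y ≤ 0) := by
  set L : ℝ := (l : ℝ) - 1 with hL
  have hL0 : 0 ≤ L := by
    simp only [hL, sub_nonneg]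
    exact_mod_cast hl
  have hdiff : Differentiable ℝ (phiA l) := fun y => (phiA_hasDerivAt l y).differentiableAt
  have hderiv : ∀ y, deriv (phiA l) y = (L - y) * Real.exp y :=
    fun y => (phiA_hasDerivAt l y).deriv
  have hmono : MonotoneOn (phiA l) (Icc 0 L) := by
    apply monotoneOn_of_deriv_nonneg (convex_Icc 0 L) (phiA_cont l).continuousOn
      hdiff.differentiableOn
    intro y hy
    rw [interior_Icc] at hy
    rw [hderiv]
    have : 0 ≤ L - y := by linarith [hy.2]
    positivity
  have hanti : AntitoneOn (phiA l) (Ici L) := by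
    apply antitoneOn_of_deriv_nonpos (convex_Ici L) (phiA_cont l).continuousOn
      hdiff.differentiableOn
    intro y hy
    rw [interior_Ici] at hy
    rw [hderiv]
    have h1 : L - y ≤ 0 := by linarith [mem_Ioi.mp hy]
    exact mul_nonpos_of_nonpos_of_nonneg h1 (Real.exp_pos y).le
  have hphiL : 0 ≤ phiA l L := by
    rw [← phiA_zero l]
    exact hmono (left_mem_Icc.mpr hL0) (right_mem_Icc.mpr hL0) hL0
  have hlpos : (0:ℝ) < l := by exact_mod_cast hl
  have hphil : phiA l (l : ℝ) ≤ 0 := by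
    have he : phiA l (l : ℝ) = -(l : ℝ) := by unfold phiA; ring
    rw [he]
    linarith
  have hLl : L ≤ (l : ℝ) := by rw [hL]; linarith
  have hIV := intermediate_value_Icc' hLl (phiA_cont l).continuousOn
  have h0mem : (0 : ℝ) ∈ Icc (phiA l (l : ℝ)) (phiA l L) := ⟨hphil, hphiL⟩
  obtain ⟨ys, hysmem, hysval⟩ := hIV h0mem
  refine ⟨ys, le_trans hL0 hysmem.1, ?_, ?_⟩
  · intro y hy0 hyys
    rcases le_total y L with h | h
    · calc (0:ℝ) = phiA l 0 := (phiA_zero l).symm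
        _ ≤ phiA l y := hmono (left_mem_Icc.mpr hL0) ⟨hy0, h⟩ hy0
    · calc (0:ℝ) = phiA l ys := hysval.symm
        _ ≤ phiA l y := hanti h hysmem.1 hyys
  · intro y hyys
    have hyL : L ≤ y := le_trans hysmem.1 hyys
    calc phiA l y ≤ phiA l ys := hanti hysmem.1 hyL hyys
      _ = 0 := hysval

lemma one_lt_exp_hx {h x : ℝ} (hh : 0 < h) (hx : 0 < x) : 1 < Real.exp (h * x) := by
  rw [← Real.exp_zero]
  exact Real.exp_lt_exp.mpr (by positivity)

lemma fA_contOn (l : ℕ) {h : ℝ} (hh : 0 < h) : ContinuousOn (fA l h) (Ioi 0) := by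
  apply ContinuousOn.div (continuous_pow l).continuousOn
  · fun_prop
  · intro x hx
    have := one_lt_exp_hx hh (mem_Ioi.mp hx)
    intro hc
    simp only [sub_eq_zero] at hc
    rw [← hc] at this
    exact lt_irrefl _ this

lemma fA_hasDerivAt (l : ℕ) (hl : 1 ≤ l) {h x : ℝ} (hh : 0 < h) (hx : 0 < x) :
    HasDerivAt (fA l h)
      (x ^ (l - 1) * phiA l (h * x) / (Real.exp (h * x) - 1) ^ 2) x := by
  have hden : Real.exp (h * x) - 1 ≠ 0 := by
    have := one_lt_exp_hx hh hx; linarith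
  have h1 : HasDerivAt (fun x : ℝ => x ^ l) ((l : ℝ) * x ^ (l - 1)) x := hasDerivAt_pow l x
  have h2 : HasDerivAt (fun x : ℝ => Real.exp (h * x) - 1) (Real.exp (h * x) * h) x := by
    have := ((hasDerivAt_id x).const_mul h).exp
    simpa using this.sub_const 1
  have h3 := h1.div h2 hden
  refine h3.congr_deriv ?_
  have hxl : x ^ l = x ^ (l - 1) * x := by
    conv_lhs => rw [← Nat.succ_pred_eq_of_pos hl]
    rw [pow_succ, Nat.pred_eq_sub_one]
  rw [hxl]
  unfold phiA
  ring

lemma fA_unimodal (l : ℕ) (hl : 1 ≤ l) {h : ℝ} (hh : 0 < h) :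
    ∃ c : ℝ, 0 ≤ c ∧ MonotoneOn (fA l h) (Ioc 0 c) ∧
      AntitoneOn (fA l h) (Ici c ∩ Ioi 0) := by
  obtain ⟨ys, hys0, hpos, hneg⟩ := phiA_root l hl
  refine ⟨ys / h, div_nonneg hys0 hh.le, ?_, ?_⟩
  · apply monotoneOn_of_deriv_nonneg (convex_Ioc 0 (ys / h))
      ((fA_contOn l hh).mono Ioc_subset_Ioi_self)
    · rw [interior_Ioc]
      intro x hx
      exact ((fA_hasDerivAt l hl hh hx.1).differentiableAt).differentiableWithinAt
    · rw [interior_Ioc]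
      intro x hx
      rw [(fA_hasDerivAt l hl hh hx.1).deriv]
      have hphi : 0 ≤ phiA l (h * x) := by
        apply hpos _ (mul_nonneg hh.le hx.1.le)
        exact ((lt_div_iff₀' hh).mp hx.2).le
      have hxp : (0:ℝ) ≤ x ^ (l - 1) := pow_nonneg hx.1.le _
      have hd : (0:ℝ) < (Real.exp (h * x) - 1) ^ 2 :=
        pow_two_pos_of_ne_zero (by have := one_lt_exp_hx hh hx.1; intro hc; simp only [sub_eq_zero] at hc; rw [← hc] at this; exact lt_irrefl _ this)
      exact div_nonneg (mul_nonneg hxp hphi) hd.le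
  · apply antitoneOn_of_deriv_nonpos ((convex_Ici _).inter (convex_Ioi 0))
      ((fA_contOn l hh).mono inter_subset_right)
    · rw [interior_inter, interior_Ici, interior_Ioi]
      intro x hx
      exact ((fA_hasDerivAt l hl hh hx.2).differentiableAt).differentiableWithinAt
    · rw [interior_inter, interior_Ici, interior_Ioi]
      intro x hx
      rw [(fA_hasDerivAt l hl hh hx.2).deriv]
      have hphi : phiA l (h * x) ≤ 0 :=
        hneg _ ((div_lt_iff₀' hh).mp hx.1).le
      have hxp : (0:ℝ) ≤ x ^ (l - 1) := pow_nonneg hx.2.le _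
      have hd : (0:ℝ) < (Real.exp (h * x) - 1) ^ 2 :=
        pow_two_pos_of_ne_zero (by have := one_lt_exp_hx hh hx.2; intro hc; simp only [sub_eq_zero] at hc; rw [← hc] at this; exact lt_irrefl _ this)
      exact div_nonpos_of_nonpos_of_nonneg (mul_nonpos_of_nonneg_of_nonpos hxp hphi) hd.le


lemma expFactBound (l : ℕ) (hl : 1 ≤ l) {y : ℝ} (hy : 0 ≤ y) :
    y ^ l / (Nat.factorial l : ℝ) ≤ Real.exp y - 1 := by
  have hsum := Real.sum_le_exp_of_nonneg hy (l + 1)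
  have hsub : ({0, l} : Finset ℕ) ⊆ Finset.range (l + 1) := by
    intro i hi
    simp only [Finset.mem_insert, Finset.mem_singleton] at hi
    rcases hi with rfl | rfl <;> simp [Nat.lt_succ_iff]
  have hpair : ∑ i ∈ ({0, l} : Finset ℕ), y ^ i / (Nat.factorial i : ℝ)
      ≤ ∑ i ∈ Finset.range (l + 1), y ^ i / (Nat.factorial i : ℝ) := by
    apply Finset.sum_le_sum_of_subset_of_nonneg hsub
    intro i _ _
    positivity
  rw [Finset.sum_pair (by omega : (0:ℕ) ≠ l)] at hpair
  simp only [pow_zero, Nat.factorial_zero, Nat.cast_one, div_one] at hpair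
  linarith

lemma fA_nonneg (l : ℕ) {h : ℝ} (hh : 0 < h) {x : ℝ} (hx : 0 ≤ x) : 0 ≤ fA l h x := by
  unfold fA
  apply div_nonneg (pow_nonneg hx _)
  have : (1:ℝ) ≤ Real.exp (h * x) := by
    rw [← Real.exp_zero]
    exact Real.exp_le_exp.mpr (by positivity)
  linarith

lemma fA_le_M (l : ℕ) (hl : 1 ≤ l) {h : ℝ} (hh : 0 < h) {x : ℝ} (hx : 0 < x) :
    fA l h x ≤ (Nat.factorial l : ℝ) / h ^ l := by
  have hkey := expFactBound l hl (y := h * x) (by positivity)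
  have hfact : (0:ℝ) < (Nat.factorial l : ℝ) := by positivity
  have hd : (0:ℝ) < (h * x) ^ l / (Nat.factorial l : ℝ) := by positivity
  unfold fA
  calc x ^ l / (Real.exp (h * x) - 1) ≤ x ^ l / ((h * x) ^ l / (Nat.factorial l : ℝ)) := by
        gcongr
    _ = (Nat.factorial l : ℝ) / h ^ l := by
        rw [mul_pow]
        field_simp

lemma sum_max_decr (a : ℕ → ℝ) (m : ℕ) (M : ℝ)
    (ha0 : ∀ n, 0 ≤ a n) (haM : ∀ n, a n ≤ M)
    (H1 : ∀ n, n + 1 < m → a n ≤ a (n + 1))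
    (H2 : ∀ n, m ≤ n → a (n + 1) ≤ a n) (N : ℕ) :
    ∑ n ∈ Finset.range N, max 0 (a n - a (n + 1)) ≤ M := by
  have key : ∀ N : ℕ, ∑ n ∈ Finset.range N, max 0 (a n - a (n + 1))
      ≤ max (a (m - 1)) (a m) - a (max m N) := by
    intro N
    induction N with
    | zero =>
      simp only [Finset.range_zero, Finset.sum_empty, Nat.max_zero]
      have := le_max_right (a (m - 1)) (a m)
      linarith
    | succ N ih =>
      rcases lt_trichotomy (N + 1) m with hc | hc | hc
      · rw [Finset.sum_range_succ]
        have ht : max 0 (a N - a (N + 1)) = 0 := by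
          have := H1 N hc
          simp [max_eq_left]
          linarith
        rw [ht]
        have e1 : max m N = m := by omega
        have e2 : max m (N + 1) = m := by omega
        rw [e2]; rw [e1] at ih; linarith
      · rw [Finset.sum_range_succ]
        have hzero : ∑ n ∈ Finset.range N, max 0 (a n - a (n + 1)) = 0 := by
          apply Finset.sum_eq_zero
          intro n hn
          have hn' : n + 1 < m := by
            have := Finset.mem_range.mp hn; omega
          have := H1 n hn'
          simp [max_eq_left]
          linarith
        rw [hzero, zero_add]
        have e2 : max m (N + 1) = m := by omega
        have eN : N = m - 1 := by omega
        have eN1 : N + 1 = m := hc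
        have em : m - 1 + 1 = m := by omega
        rw [e2, eN, em]
        rcases le_total (a (m - 1) - a m) 0 with hs | hs
        · rw [max_eq_left hs]
          have := le_max_right (a (m - 1)) (a m)
          linarith
        · rw [max_eq_right hs]
          have := le_max_left (a (m - 1)) (a m)
          linarith
      · rw [Finset.sum_range_succ]
        have hm : m ≤ N := by omega
        have ht : max 0 (a N - a (N + 1)) = a N - a (N + 1) := by
          have := H2 N hm
          apply max_eq_right
          linarith
        rw [ht]
        have e1 : max m N = N := by omega
        have e2 : max m (N + 1) = N + 1 := by omega
        rw [e2]; rw [e1] at ih; linarith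
  calc ∑ n ∈ Finset.range N, max 0 (a n - a (n + 1))
      ≤ max (a (m - 1)) (a m) - a (max m N) := key N
    _ ≤ M - 0 := by
        apply sub_le_sub
        · exact max_le (haM _) (haM _)
        · exact ha0 _
    _ = M := by ring

lemma sum_max_incr (a : ℕ → ℝ) (m : ℕ) (M : ℝ)
    (ha0 : ∀ n, 0 ≤ a n) (haM : ∀ n, a n ≤ M)
    (H1 : ∀ n, n + 1 < m → a n ≤ a (n + 1))
    (H2 : ∀ n, m ≤ n → a (n + 1) ≤ a n) (N : ℕ) :
    ∑ n ∈ Finset.range N, max 0 (a (n + 1) - a n) ≤ M := by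
  have key : ∀ N : ℕ, ∑ n ∈ Finset.range N, max 0 (a (n + 1) - a n)
      ≤ (if N < m then a N else max (a (m - 1)) (a m)) - a 0 := by
    intro N
    induction N with
    | zero =>
      rcases Nat.eq_zero_or_pos m with hm | hm
      · subst hm
        simp
      · simp [hm]
    | succ N ih =>
      rcases lt_trichotomy (N + 1) m with hc | hc | hc
      · rw [Finset.sum_range_succ]
        have hNm : N < m := by omega
        rw [if_pos hNm] at ih
        rw [if_pos hc]
        have ht : max 0 (a (N + 1) - a N) = a (N + 1) - a N := by
          have := H1 N hc
          apply max_eq_right; linarith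
        rw [ht]; linarith
      · rw [Finset.sum_range_succ]
        have hNm : N < m := by omega
        rw [if_pos hNm] at ih
        rw [if_neg (by omega)]
        have eN : N = m - 1 := by omega
        have ht : max 0 (a (N + 1) - a N) ≤ max (a (m - 1)) (a m) - a N := by
          have em : m - 1 + 1 = m := by omega
          rw [eN, em]
          rcases le_total (a m - a (m - 1)) 0 with hs | hs
          · rw [max_eq_left hs]
            have := le_max_left (a (m - 1)) (a m)
            linarith
          · rw [max_eq_right hs]
            have := le_max_right (a (m - 1)) (a m)
            linarith
        linarith
      · rw [Finset.sum_range_succ]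
        have hm : m ≤ N := by omega
        have ht : max 0 (a (N + 1) - a N) = 0 := by
          have := H2 N hm
          apply max_eq_left; linarith
        rw [ht, if_neg (by omega)]
        rw [if_neg (by omega)] at ih
        linarith
  calc ∑ n ∈ Finset.range N, max 0 (a (n + 1) - a n)
      ≤ (if N < m then a N else max (a (m - 1)) (a m)) - a 0 := key N
    _ ≤ M - 0 := by
        apply sub_le_sub _ (ha0 _)
        split
        · exact haM _
        · exact max_le (haM _) (haM _)
    _ = M := by ring


lemma alg1 (A t : ℝ) (ht : 0 < t) :
    A * Real.exp (-t) / (1 - Real.exp (-t)) = A / (Real.exp t - 1) := by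
  have hE : (0:ℝ) < Real.exp t := Real.exp_pos t
  have h1e : 1 < Real.exp t := by
    rw [← Real.exp_zero]; exact Real.exp_lt_exp.mpr ht
  have hne : Real.exp t - 1 ≠ 0 := ne_of_gt (by linarith)
  rw [Real.exp_neg]
  have h2 : 1 - (Real.exp t)⁻¹ = (Real.exp t - 1) / Real.exp t := by field_simp
  rw [h2, div_div_eq_mul_div, mul_assoc, inv_mul_cancel₀ hE.ne', mul_one]


end Stmt6

open Stmt6 Real Set in
theorem stmt6 (l : ℕ) (hl : 1 ≤ l) (lam : ℝ) (h0 : 0 < lam) (h1 : lam < 1) :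
    |(∑' n : ℕ, ((n : ℝ) + 1) ^ l * lam ^ (n + 1) / (1 - lam ^ (n + 1)))
        - ∫ x in Set.Ioi (1 : ℝ), x ^ l * lam ^ x / (1 - lam ^ x)|
      ≤ 2 * (Nat.factorial l : ℝ) / (-Real.log lam) ^ l := by
  have hloglt : Real.log lam < 0 := Real.log_neg h0 h1
  set h : ℝ := -Real.log lam with hdef
  have hh : 0 < h := by rw [hdef]; linarith
  set f : ℝ → ℝ := fA l h with hfdef
  set M : ℝ := (Nat.factorial l : ℝ) / h ^ l with hMdef
  have hM0 : 0 ≤ M := by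
    rw [hMdef]; positivity
  obtain ⟨c, hc0, hmono, hanti⟩ := fA_unimodal l hl hh
  set a : ℕ → ℝ := fun n => f ((n : ℝ) + 1) with hadef
  -- pointwise facts about a
  have hnpos : ∀ n : ℕ, (0:ℝ) < (n : ℝ) + 1 := fun n => by positivity
  have ha0 : ∀ n, 0 ≤ a n := fun n => fA_nonneg l hh (hnpos n).le
  have haM : ∀ n, a n ≤ M := fun n => fA_le_M l hl hh (hnpos n)
  -- rewriting the tsum terms
  have hexplam : ∀ k : ℕ, lam ^ k = Real.exp (-(h * k)) := by
    intro k
    conv_lhs => rw [← Real.exp_log h0]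
    rw [← Real.exp_nat_mul]
    congr 1
    rw [hdef]; ring
  have haeq : ∀ n : ℕ, ((n : ℝ) + 1) ^ l * lam ^ (n + 1) / (1 - lam ^ (n + 1)) = a n := by
    intro n
    rw [hexplam (n + 1)]
    have hcast : ((n + 1 : ℕ) : ℝ) = (n : ℝ) + 1 := by push_cast; ring
    rw [hcast]
    rw [alg1 _ _ (by positivity)]
    rfl
  have heqOn : ∀ x ∈ Ioi (1:ℝ), x ^ l * lam ^ x / (1 - lam ^ x) = f x := by
    intro x hx
    have hx1 : (1:ℝ) < x := hx
    have hx0 : (0:ℝ) < x := by linarith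
    rw [Real.rpow_def_of_pos h0 x]
    have : Real.log lam * x = -(h * x) := by rw [hdef]; ring
    rw [this, alg1 _ _ (by positivity)]
    rfl
  -- the turning index
  set m : ℕ := ⌊c⌋₊ with hmdef
  have H1 : ∀ n : ℕ, n + 1 < m → a n ≤ a (n + 1) := by
    intro n hn
    have h2c : ((n : ℝ) + 2) ≤ c := by
      have : ((n + 2 : ℕ) : ℝ) ≤ c := by
        apply (Nat.le_floor_iff hc0).mp
        omega
      push_cast at this
      linarith
    have e1 : a (n + 1) = f ((n : ℝ) + 2) := by
      show f (((n + 1 : ℕ) : ℝ) + 1) = f ((n : ℝ) + 2)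
      congr 1
      push_cast
      ring
    rw [e1]
    apply hmono (mem_Ioc.mpr ⟨hnpos n, by linarith⟩)
      (mem_Ioc.mpr ⟨by positivity, h2c⟩) (by linarith)
  have H2 : ∀ n : ℕ, m ≤ n → a (n + 1) ≤ a n := by
    intro n hn
    have hc1 : c ≤ (n : ℝ) + 1 := by
      have h3 := Nat.lt_floor_add_one c
      rw [hmdef] at hn
      have h4 : ((⌊c⌋₊ : ℕ) : ℝ) ≤ (n : ℝ) := Nat.cast_le.mpr hn
      linarith
    have e1 : a (n + 1) = f ((n : ℝ) + 2) := by
      show f (((n + 1 : ℕ) : ℝ) + 1) = f ((n : ℝ) + 2)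
      congr 1; push_cast; ring
    rw [e1]
    apply hanti (mem_inter (mem_Ici.mpr hc1) (mem_Ioi.mpr (hnpos n)))
      (mem_inter (mem_Ici.mpr (by linarith)) (mem_Ioi.mpr (by positivity))) (by linarith)
  -- interval integrals
  set I : ℕ → ℝ := fun n => ∫ x in ((n : ℝ) + 1)..((n : ℝ) + 2), f x with hIdef
  have hsubI : ∀ n : ℕ, Icc ((n : ℝ) + 1) ((n : ℝ) + 2) ⊆ Ioi 0 := by
    intro n x hx
    have := hx.1
    have := hnpos n
    exact mem_Ioi.mpr (by linarith)
  have hcontI : ∀ n : ℕ, ContinuousOn f (Icc ((n : ℝ) + 1) ((n : ℝ) + 2)) :=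
    fun n => (fA_contOn l hh).mono (hsubI n)
  have hII : ∀ n : ℕ, IntervalIntegrable f volume ((n : ℝ) + 1) ((n : ℝ) + 2) := by
    intro n
    apply ContinuousOn.intervalIntegrable
    rw [uIcc_of_le (by linarith)]
    exact hcontI n
  have hconst : ∀ (k : ℝ) (n : ℕ), (∫ x in ((n : ℝ) + 1)..((n : ℝ) + 2), k) = k := by
    intro k n
    rw [intervalIntegral.integral_const]
    norm_num
  have hlow : ∀ n : ℕ, min (a n) (a (n + 1)) ≤ I n := by
    intro n
    have e1 : a (n + 1) = f ((n : ℝ) + 2) := by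
      show f (((n + 1 : ℕ) : ℝ) + 1) = f ((n : ℝ) + 2)
      congr 1; push_cast; ring
    rw [hIdef]
    calc min (a n) (a (n + 1))
        = ∫ x in ((n : ℝ) + 1)..((n : ℝ) + 2), min (a n) (a (n + 1)) := (hconst _ n).symm
      _ ≤ ∫ x in ((n : ℝ) + 1)..((n : ℝ) + 2), f x := by
          apply intervalIntegral.integral_mono_on (by linarith) intervalIntegrable_const (hII n)
          intro x hx
          have hx0 : (0:ℝ) < x := hsubI n hx
          rcases le_total x c with hcx | hcx
          · have : a n ≤ f x := by
              apply hmono (mem_Ioc.mpr ⟨hnpos n, by linarith [hx.1]⟩)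
                (mem_Ioc.mpr ⟨hx0, hcx⟩) hx.1
            exact le_trans (min_le_left _ _) this
          · have : a (n + 1) ≤ f x := by
              rw [e1]
              apply hanti (mem_inter (mem_Ici.mpr hcx) (mem_Ioi.mpr hx0))
                (mem_inter (mem_Ici.mpr (by linarith [hx.2])) (mem_Ioi.mpr (by positivity))) hx.2
            exact le_trans (min_le_right _ _) this
  have hub3 : ∀ n : ℕ, I n ≤ M := by
    intro n
    rw [hIdef]
    calc (∫ x in ((n : ℝ) + 1)..((n : ℝ) + 2), f x)
        ≤ ∫ x in ((n : ℝ) + 1)..((n : ℝ) + 2), M := by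
          apply intervalIntegral.integral_mono_on (by linarith) (hII n) intervalIntegrable_const
          intro x hx
          exact fA_le_M l hl hh (hsubI n hx)
      _ = M := hconst _ n
  have hub1 : ∀ n : ℕ, c ≤ (n : ℝ) + 1 → I n ≤ a n := by
    intro n hc1
    rw [hIdef]
    calc (∫ x in ((n : ℝ) + 1)..((n : ℝ) + 2), f x)
        ≤ ∫ x in ((n : ℝ) + 1)..((n : ℝ) + 2), a n := by
          apply intervalIntegral.integral_mono_on (by linarith) (hII n) intervalIntegrable_const
          intro x hx
          have hx0 : (0:ℝ) < x := hsubI n hx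
          apply hanti (mem_inter (mem_Ici.mpr hc1) (mem_Ioi.mpr (hnpos n)))
            (mem_inter (mem_Ici.mpr (by linarith [hx.1])) (mem_Ioi.mpr hx0)) hx.1
      _ = a n := hconst _ n
  have hub2 : ∀ n : ℕ, ((n : ℝ) + 2) ≤ c → I n ≤ a (n + 1) := by
    intro n hc2
    have e1 : a (n + 1) = f ((n : ℝ) + 2) := by
      show f (((n + 1 : ℕ) : ℝ) + 1) = f ((n : ℝ) + 2)
      congr 1; push_cast; ring
    rw [hIdef]
    calc (∫ x in ((n : ℝ) + 1)..((n : ℝ) + 2), f x)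
        ≤ ∫ x in ((n : ℝ) + 1)..((n : ℝ) + 2), a (n + 1) := by
          apply intervalIntegral.integral_mono_on (by linarith) (hII n) intervalIntegrable_const
          intro x hx
          have hx0 : (0:ℝ) < x := hsubI n hx
          rw [e1]
          apply hmono (mem_Ioc.mpr ⟨hx0, by linarith [hx.2]⟩)
            (mem_Ioc.mpr ⟨by positivity, hc2⟩) hx.2
      _ = a (n + 1) := hconst _ n
  -- per-interval estimates
  have hup : ∀ n : ℕ, a n - I n ≤ max 0 (a n - a (n + 1)) := by
    intro n
    have := hlow n
    rcases le_total (a n) (a (n + 1)) with hs | hs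
    · rw [min_eq_left hs] at this
      have : a n - I n ≤ 0 := by linarith
      exact le_trans this (le_max_left _ _)
    · rw [min_eq_right hs] at this
      have h2 : a n - I n ≤ a n - a (n + 1) := by linarith
      exact le_trans h2 (le_max_right _ _)
  have hdown : ∀ n : ℕ, I n - a n ≤ max 0 (a (n + 1) - a n) + (if n + 1 = m then M else 0) := by
    intro n
    have hifn : (0:ℝ) ≤ (if n + 1 = m then M else 0) := by
      split
      · exact hM0
      · exact le_rfl
    rcases le_or_gt c ((n : ℝ) + 1) with hcase | hcase
    · have := hub1 n hcase
      have h2 : I n - a n ≤ 0 := by linarith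
      have h3 : (0:ℝ) ≤ max 0 (a (n + 1) - a n) := le_max_left _ _
      linarith
    · rcases le_or_gt ((n : ℝ) + 2) c with hcase2 | hcase2
      · have := hub2 n hcase2
        have h2 : I n - a n ≤ a (n + 1) - a n := by linarith
        have h3 : a (n + 1) - a n ≤ max 0 (a (n + 1) - a n) := le_max_right _ _
        linarith
      · have hnm : n + 1 = m := by
          have hle : n + 1 ≤ m := by
            rw [hmdef]
            apply Nat.le_floor
            push_cast
            exact hcase.le
          have hlt : m < n + 2 := by
            rw [hmdef]
            rw [Nat.floor_lt hc0]
            push_cast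
            exact hcase2
          omega
        rw [if_pos hnm]
        have := hub3 n
        have h3 : (0:ℝ) ≤ max 0 (a (n + 1) - a n) := le_max_left _ _
        have := ha0 n
        linarith
  -- splitting the integral
  have hsplit : ∀ N : ℕ, (∫ x in (1:ℝ)..((N : ℝ) + 1), f x) = ∑ n ∈ Finset.range N, I n := by
    intro N
    have hadj := intervalIntegral.sum_integral_adjacent_intervals
      (a := fun k : ℕ => (k : ℝ) + 1) (n := N) (μ := volume) (f := f)
      (fun k _ => by
        show IntervalIntegrable f volume ((k : ℝ) + 1) (((k + 1 : ℕ) : ℝ) + 1)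
        have he : ((k + 1 : ℕ) : ℝ) + 1 = (k : ℝ) + 2 := by push_cast; ring
        rw [he]
        exact hII k)
    calc (∫ x in (1:ℝ)..((N : ℝ) + 1), f x)
        = ∫ x in (((0:ℕ) : ℝ) + 1)..((N : ℝ) + 1), f x := by norm_num
      _ = ∑ k ∈ Finset.range N, ∫ x in ((k : ℝ) + 1)..(((k + 1 : ℕ) : ℝ) + 1), f x := hadj.symm
      _ = ∑ n ∈ Finset.range N, I n := by
          apply Finset.sum_congr rfl
          intro k _
          rw [hIdef]
          congr 1
          push_cast
          ring
  -- bound on partial sums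
  have hbound : ∀ N : ℕ, |(∑ n ∈ Finset.range N, a n) - ∫ x in (1:ℝ)..((N : ℝ) + 1), f x| ≤ 2 * M := by
    intro N
    rw [hsplit N, ← Finset.sum_sub_distrib]
    have hupS : ∑ n ∈ Finset.range N, (a n - I n) ≤ M := by
      calc ∑ n ∈ Finset.range N, (a n - I n)
          ≤ ∑ n ∈ Finset.range N, max 0 (a n - a (n + 1)) :=
            Finset.sum_le_sum (fun n _ => hup n)
        _ ≤ M := sum_max_decr a m M ha0 haM H1 H2 N
    have hdownS : ∑ n ∈ Finset.range N, (I n - a n) ≤ 2 * M := by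
      have hifS : ∑ n ∈ Finset.range N, (if n + 1 = m then M else 0) ≤ M := by
        calc ∑ n ∈ Finset.range N, (if n + 1 = m then M else 0)
            ≤ ∑ n ∈ Finset.range N, (if n = m - 1 then M else 0) := by
              apply Finset.sum_le_sum
              intro n _
              by_cases hc : n + 1 = m
              · rw [if_pos hc, if_pos (by omega)]
              · rw [if_neg hc]
                split
                · exact hM0
                · exact le_rfl
          _ = if m - 1 ∈ Finset.range N then M else 0 := by
              rw [Finset.sum_ite_eq' (Finset.range N) (m - 1) (fun _ => M)]
          _ ≤ M := by split <;> simp [hM0]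
      calc ∑ n ∈ Finset.range N, (I n - a n)
          ≤ ∑ n ∈ Finset.range N, (max 0 (a (n + 1) - a n) + (if n + 1 = m then M else 0)) :=
            Finset.sum_le_sum (fun n _ => hdown n)
        _ = (∑ n ∈ Finset.range N, max 0 (a (n + 1) - a n))
            + ∑ n ∈ Finset.range N, (if n + 1 = m then M else 0) := Finset.sum_add_distrib
        _ ≤ M + M := add_le_add (sum_max_incr a m M ha0 haM H1 H2 N) hifS
        _ = 2 * M := by ring
    rw [abs_le]
    constructor
    · have : -(∑ n ∈ Finset.range N, (a n - I n)) = ∑ n ∈ Finset.range N, (I n - a n) := by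
        rw [← Finset.sum_neg_distrib]
        apply Finset.sum_congr rfl
        intro n _
        ring
      linarith
    · linarith
  -- summability
  have hlamnorm : ‖lam‖ < 1 := by rw [Real.norm_eq_abs, abs_of_pos h0]; exact h1
  have hgsum : Summable (fun n : ℕ => ((n : ℝ)) ^ l * lam ^ n) :=
    summable_pow_mul_geometric_of_norm_lt_one l hlamnorm
  have hgsum1 : Summable (fun n : ℕ => ((n : ℝ) + 1) ^ l * lam ^ (n + 1)) := by
    have h2 := (summable_nat_add_iff 1).mpr hgsum
    apply h2.congr
    intro n
    push_cast
    ring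
  have hsummable : Summable a := by
    apply Summable.of_nonneg_of_le ha0 _ (hgsum1.mul_left (1 - lam)⁻¹)
    intro n
    rw [← haeq n]
    have hpow0 : (0:ℝ) < lam ^ (n + 1) := by positivity
    have hlam1 : lam ^ (n + 1) ≤ lam := by
      calc lam ^ (n + 1) ≤ lam ^ 1 := pow_le_pow_of_le_one h0.le h1.le (by omega)
        _ = lam := pow_one lam
    have h2 : (0:ℝ) < 1 - lam := by linarith
    have h3 : 1 - lam ≤ 1 - lam ^ (n + 1) := by linarith
    calc ((n : ℝ) + 1) ^ l * lam ^ (n + 1) / (1 - lam ^ (n + 1))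
        ≤ ((n : ℝ) + 1) ^ l * lam ^ (n + 1) / (1 - lam) := by
          gcongr
          
      _ = (1 - lam)⁻¹ * (((n : ℝ) + 1) ^ l * lam ^ (n + 1)) := by
          rw [inv_mul_eq_div]
  -- integrability on (1, ∞)
  have hintOn : IntegrableOn f (Ioi (1:ℝ)) volume := by
    set C : ℝ := (Nat.factorial l : ℝ) * (2 / h) ^ l * (1 - Real.exp (-h))⁻¹ with hCdef
    have hexpnh : Real.exp (-h) < 1 := by
      rw [← Real.exp_zero]
      exact Real.exp_lt_exp.mpr (by linarith)
    have hC0 : 0 ≤ C := by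
      rw [hCdef]
      have : (0:ℝ) < 1 - Real.exp (-h) := by linarith
      positivity
    apply Integrable.mono' ((exp_neg_integrableOn_Ioi 1 (by linarith : (0:ℝ) < h / 2)).const_mul C)
    · exact ((fA_contOn l hh).mono (fun x (hx : x ∈ Ioi (1:ℝ)) => mem_Ioi.mpr (by
        have := mem_Ioi.mp hx; linarith))).aestronglyMeasurable measurableSet_Ioi
    · rw [ae_restrict_iff' measurableSet_Ioi]
      apply ae_of_all
      intro x hx
      have hx1 : (1:ℝ) < x := mem_Ioi.mp hx
      have hx0 : (0:ℝ) < x := by linarith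
      rw [Real.norm_eq_abs, abs_of_nonneg (fA_nonneg l hh hx0.le)]
      have hkey := expFactBound l hl (y := h / 2 * x) (by positivity)
      have he1 : x ^ l ≤ (Nat.factorial l : ℝ) * (2 / h) ^ l * Real.exp (h / 2 * x) := by
        have h2 : (h / 2 * x) ^ l / (Nat.factorial l : ℝ) ≤ Real.exp (h / 2 * x) := by
          have := Real.exp_pos (h / 2 * x)
          linarith [hkey]
        have h3 : (h / 2 * x) ^ l ≤ (Nat.factorial l : ℝ) * Real.exp (h / 2 * x) := by
          rw [div_le_iff₀ (by positivity : (0:ℝ) < (Nat.factorial l : ℝ))] at h2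
          linarith [h2]
        have h4 : x ^ l = (2 / h) ^ l * (h / 2 * x) ^ l := by
          rw [← mul_pow]
          congr 1
          field_simp
        rw [h4]
        calc (2 / h) ^ l * (h / 2 * x) ^ l
            ≤ (2 / h) ^ l * ((Nat.factorial l : ℝ) * Real.exp (h / 2 * x)) := by
              gcongr
              
          _ = (Nat.factorial l : ℝ) * (2 / h) ^ l * Real.exp (h / 2 * x) := by ring
      have he2 : (1 - Real.exp (-h)) * Real.exp (h * x) ≤ Real.exp (h * x) - 1 := by
        have h5 : Real.exp (-h) * Real.exp (h * x) = Real.exp (h * x - h) := by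
          rw [← Real.exp_add]; congr 1; ring
        have h6 : (1:ℝ) ≤ Real.exp (h * x - h) := by
          rw [← Real.exp_zero]
          apply Real.exp_le_exp.mpr
          nlinarith
        nlinarith [h5, h6]
      have hd1 : (0:ℝ) < (1 - Real.exp (-h)) * Real.exp (h * x) := by
        have : (0:ℝ) < 1 - Real.exp (-h) := by linarith
        positivity
      have hnum0 : (0:ℝ) ≤ x ^ l := by positivity
      calc fA l h x = x ^ l / (Real.exp (h * x) - 1) := rfl
          _ ≤ x ^ l / ((1 - Real.exp (-h)) * Real.exp (h * x)) := by
              gcongr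
          _ ≤ ((Nat.factorial l : ℝ) * (2 / h) ^ l * Real.exp (h / 2 * x))
                / ((1 - Real.exp (-h)) * Real.exp (h * x)) := by
              gcongr
          _ = C * Real.exp (-(h / 2) * x) := by
              rw [hCdef]
              rw [eq_comm]
              have hee : Real.exp (-(h / 2) * x) = Real.exp (h / 2 * x) / Real.exp (h * x) := by
                rw [← Real.exp_sub]; congr 1; ring
              rw [hee]
              have : (0:ℝ) < 1 - Real.exp (-h) := by linarith
              field_simp
  -- pass to the limit
  have hS : Filter.Tendsto (fun N : ℕ => ∑ n ∈ Finset.range N, a n)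
      Filter.atTop (nhds (∑' n, a n)) := hsummable.hasSum.tendsto_sum_nat
  have hJ : Filter.Tendsto (fun N : ℕ => ∫ x in (1:ℝ)..((N : ℝ) + 1), f x)
      Filter.atTop (nhds (∫ x in Ioi (1:ℝ), f x)) := by
    apply intervalIntegral_tendsto_integral_Ioi 1 hintOn
    exact Filter.tendsto_atTop_add_const_right _ 1 tendsto_natCast_atTop_atTop
  have hcomb := (hS.sub hJ).abs
  have hfinal : |(∑' n, a n) - ∫ x in Ioi (1:ℝ), f x| ≤ 2 * M :=
    le_of_tendsto hcomb (Filter.Eventually.of_forall hbound)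
  have ht : (∑' n : ℕ, ((n : ℝ) + 1) ^ l * lam ^ (n + 1) / (1 - lam ^ (n + 1))) = ∑' n, a n :=
    tsum_congr haeq
  have hi : (∫ x in Set.Ioi (1:ℝ), x ^ l * lam ^ x / (1 - lam ^ x)) = ∫ x in Ioi (1:ℝ), f x :=
    setIntegral_congr_fun measurableSet_Ioi heqOn
  rw [ht, hi]
  calc |(∑' n, a n) - ∫ x in Ioi (1:ℝ), f x| ≤ 2 * M := hfinal
    _ = 2 * (Nat.factorial l : ℝ) / h ^ l := by rw [hMdef]; ring
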